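/- Let μ₀ be a Borel probability measure on ℝ and (μ₀^N)_{N∈ℕ} a sequence of Borel probability measures on ℝ with W₁(μ₀^N, μ₀) → 0 as N → ∞. Suppose T and, for each N, T^N are maps [0,∞) × ℝ → ℝ such that: T(0,x) = x and T^N(0,x) = x for all x; for each t ≥ 0 the maps T(t,·), T^N(t,·) are Borel measurable and satisfy T(t,x+2π) = T(t,x)+2π and T^N(t,x+2π) = T^N(t,x)+2π; and for every x ∈ ℝ, t ↦ T(t,x) and t ↦ T^N(t,x) are differentiable with ∂ₜT(t,x) = ∫ h_β′(T(t,x) − T(t,y)) dμ₀(y) and ∂ₜT^N(t,x) = ∫ h_β′(T^N(t,x) − T^N(t,y)) dμ₀^N(y). Then for every fixed t ≥ 0, W₁(T^N(t,·)₊μ₀^N, T(t,·)₊μ₀) → 0 as N → ∞. (Mean-field limit: convergence of the empirical dynamics to the mean-field dynamics at every fixed time.) -/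

import Mathlib

open MeasureTheory Real Filter

/-- The interaction kernel `h_β(θ) = β⁻¹ exp(β cos θ)`. -/
noncomputable def hBeta (β : ℝ) : ℝ → ℝ := fun θ => β⁻¹ * Real.exp (β * Real.cos θ)

/-- Its derivative `h_β′`. -/
noncomputable def hBeta' (β : ℝ) : ℝ → ℝ := deriv (hBeta β)

/-- Periodic Kantorovich–Rubinstein distance: sup over 2π-periodic 1-Lipschitz test functions. -/
noncomputable def W1 (μ ν : Measure ℝ) : ℝ :=
  ⨆ f : {f : ℝ → ℝ // Function.Periodic f (2 * π) ∧ LipschitzWith 1 f},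
    (∫ x, f.1 x ∂μ) - ∫ x, f.1 x ∂ν

section aux
variable {β : ℝ} (hβ : 0 < β)

theorem hBeta_hasDeriv (θ : ℝ) :
    HasDerivAt (hBeta β) (β⁻¹ * (Real.exp (β * Real.cos θ) * (β * -Real.sin θ))) θ := by
  have h1 : HasDerivAt (fun θ : ℝ => β * Real.cos θ) (β * -Real.sin θ) θ :=
    (Real.hasDerivAt_cos θ).const_mul β
  exact (h1.exp.const_mul β⁻¹)

theorem hBeta'_eq (hβ : 0 < β) :
    hBeta' β = fun θ => -Real.sin θ * Real.exp (β * Real.cos θ) := by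
  funext θ
  have := (hBeta_hasDeriv (β := β) θ).deriv
  rw [hBeta', this]
  field_simp

theorem hBeta'_bound (hβ : 0 < β) (θ : ℝ) : |hBeta' β θ| ≤ Real.exp β := by
  rw [hBeta'_eq hβ]
  have h1 : |(-Real.sin θ)| ≤ 1 := by rw [abs_neg]; exact Real.abs_sin_le_one θ
  have h2 : Real.exp (β * Real.cos θ) ≤ Real.exp β := by
    apply Real.exp_le_exp.2
    nlinarith [Real.cos_le_one θ, Real.neg_one_le_cos θ]
  calc |(-Real.sin θ * Real.exp (β * Real.cos θ))|
      = |(-Real.sin θ)| * |Real.exp (β * Real.cos θ)| := abs_mul _ _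
    _ ≤ 1 * Real.exp β := by
        rw [abs_of_pos (Real.exp_pos _)]
        exact mul_le_mul h1 h2 (Real.exp_pos _).le zero_le_one
    _ = Real.exp β := one_mul _

theorem hBeta'_hasDeriv (hβ : 0 < β) (θ : ℝ) :
    HasDerivAt (hBeta' β)
      (-Real.cos θ * Real.exp (β * Real.cos θ) +
        -Real.sin θ * (Real.exp (β * Real.cos θ) * (β * -Real.sin θ))) θ := by
  rw [hBeta'_eq hβ]
  have h1 : HasDerivAt (fun θ : ℝ => -Real.sin θ) (-Real.cos θ) θ := (Real.hasDerivAt_sin θ).neg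
  have h2 : HasDerivAt (fun θ : ℝ => Real.exp (β * Real.cos θ))
      (Real.exp (β * Real.cos θ) * (β * -Real.sin θ)) θ :=
    ((Real.hasDerivAt_cos θ).const_mul β).exp
  exact h1.mul h2

theorem hBeta'_lip (hβ : 0 < β) (a b : ℝ) :
    |hBeta' β a - hBeta' β b| ≤ ((1 + β) * Real.exp β) * |a - b| := by
  set C : ℝ := (1 + β) * Real.exp β with hC
  have hC0 : 0 ≤ C := by positivity
  have hlip : LipschitzWith ⟨C, hC0⟩ (hBeta' β) := by
    apply lipschitzWith_of_nnnorm_deriv_le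
    · intro x; exact (hBeta'_hasDeriv hβ x).differentiableAt
    · intro x
      refine NNReal.coe_le_coe.1 ?_
      have hd := (hBeta'_hasDeriv hβ x).deriv
      rw [coe_nnnorm, hd]
      have he : Real.exp (β * Real.cos x) ≤ Real.exp β := by
        apply Real.exp_le_exp.2
        nlinarith [Real.cos_le_one x, Real.neg_one_le_cos x]
      have he0 : (0:ℝ) < Real.exp (β * Real.cos x) := Real.exp_pos _
      have h1 : |(-Real.cos x * Real.exp (β * Real.cos x) +
          -Real.sin x * (Real.exp (β * Real.cos x) * (β * -Real.sin x)))| ≤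
          Real.exp (β * Real.cos x) * (1 + β) := by
        have := abs_add_le (-Real.cos x * Real.exp (β * Real.cos x))
          (-Real.sin x * (Real.exp (β * Real.cos x) * (β * -Real.sin x)))
        have hcos : |(-Real.cos x)| ≤ 1 := by rw [abs_neg]; exact Real.abs_cos_le_one x
        have hsin : |(-Real.sin x)| ≤ 1 := by rw [abs_neg]; exact Real.abs_sin_le_one x
        have e1 : |(-Real.cos x * Real.exp (β * Real.cos x))| ≤ Real.exp (β * Real.cos x) := by
          rw [abs_mul, abs_of_pos he0]
          nlinarith
        have e2 : |(-Real.sin x * (Real.exp (β * Real.cos x) * (β * -Real.sin x)))| ≤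
            Real.exp (β * Real.cos x) * β := by
          rw [abs_mul, abs_mul, abs_mul, abs_neg, abs_of_pos he0, abs_of_pos hβ]
          have h1 := Real.abs_sin_le_one x
          have h2 := abs_nonneg (Real.sin x)
          nlinarith [mul_le_mul_of_nonneg_left (mul_le_one₀ h1 h2 h1)
            (by positivity : (0:ℝ) ≤ Real.exp (β * Real.cos x) * β)]
        calc _ ≤ _ := this
          _ ≤ Real.exp (β * Real.cos x) + Real.exp (β * Real.cos x) * β := add_le_add e1 e2
          _ = Real.exp (β * Real.cos x) * (1 + β) := by ring
      show ‖_‖ ≤ C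
      rw [Real.norm_eq_abs]
      calc _ ≤ Real.exp (β * Real.cos x) * (1 + β) := h1
        _ ≤ C := by rw [hC]; nlinarith
  have := hlip.dist_le_mul a b
  rw [Real.dist_eq, Real.dist_eq] at this
  exact this.trans_eq (by rfl)

theorem hBeta'_periodic (hβ : 0 < β) : Function.Periodic (hBeta' β) (2 * π) := by
  intro x
  rw [hBeta'_eq hβ]
  simp [Real.sin_add_two_pi, Real.cos_add_two_pi]

theorem hBeta'_continuous (hβ : 0 < β) : Continuous (hBeta' β) := by
  rw [hBeta'_eq hβ]
  continuity

end aux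

section W1aux

theorem integrable_of_bound {μ : Measure ℝ} [IsFiniteMeasure μ] {f : ℝ → ℝ}
    (hm : AEStronglyMeasurable f μ) (B : ℝ) (hb : ∀ x, |f x| ≤ B) : Integrable f μ :=
  (integrable_const B).mono' hm (ae_of_all _ fun x => by simpa using hb x)

theorem test_osc {f : ℝ → ℝ} (hper : Function.Periodic f (2 * π)) (hlip : LipschitzWith 1 f)
    (x : ℝ) : |f x - f 0| ≤ 2 * π := by
  have hp : (0:ℝ) < 2 * π := by positivity
  set n : ℤ := ⌊x / (2 * π)⌋ with hn
  have hxy : f x = f (x - n * (2 * π)) := (hper.sub_int_mul_eq n).symm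
  have h1 : (n : ℝ) ≤ x / (2 * π) := Int.floor_le _
  have h2 : x / (2 * π) < n + 1 := Int.lt_floor_add_one _
  have hy0 : 0 ≤ x - n * (2 * π) := by
    have := mul_le_mul_of_nonneg_right h1 hp.le
    rw [div_mul_cancel₀] at this
    · linarith
    · positivity
  have hy1 : x - n * (2 * π) ≤ 2 * π := by
    have := mul_le_mul_of_nonneg_right h2.le hp.le
    rw [div_mul_cancel₀] at this
    · nlinarith
    · positivity
  rw [hxy]
  have := hlip.dist_le_mul (x - n * (2 * π)) 0
  rw [Real.dist_eq, Real.dist_eq, sub_zero, NNReal.coe_one, one_mul] at this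
  calc |f (x - n * (2 * π)) - f 0| ≤ |x - n * (2 * π)| := this
    _ ≤ 2 * π := abs_le.2 ⟨by linarith, hy1⟩

theorem test_bound {f : ℝ → ℝ} (hper : Function.Periodic f (2 * π)) (hlip : LipschitzWith 1 f)
    (x : ℝ) : |f x| ≤ |f 0| + 2 * π := by
  have := test_osc hper hlip x
  have := abs_sub_abs_le_abs_sub (f x) (f 0)
  linarith

theorem test_integrable {μ : Measure ℝ} [IsFiniteMeasure μ] {f : ℝ → ℝ}
    (hper : Function.Periodic f (2 * π)) (hlip : LipschitzWith 1 f) : Integrable f μ :=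
  integrable_of_bound hlip.continuous.aestronglyMeasurable _ (test_bound hper hlip)

theorem W1_diff_le {μ ν : Measure ℝ} [IsProbabilityMeasure μ] [IsProbabilityMeasure ν]
    (f : {f : ℝ → ℝ // Function.Periodic f (2 * π) ∧ LipschitzWith 1 f}) :
    (∫ x, f.1 x ∂μ) - ∫ x, f.1 x ∂ν ≤ 4 * π := by
  obtain ⟨f, hper, hlip⟩ := f
  have hintμ : Integrable f μ := test_integrable hper hlip
  have hintν : Integrable f ν := test_integrable hper hlip
  have key : ∀ (κ : Measure ℝ) [IsProbabilityMeasure κ], Integrable f κ →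
      |∫ x, f x ∂κ - f 0| ≤ 2 * π := by
    intro κ hκ hint
    have : ∫ x, f x ∂κ - f 0 = ∫ x, (f x - f 0) ∂κ := by
      rw [integral_sub hint (integrable_const _), integral_const]
      simp
    rw [this]
    have := norm_integral_le_of_norm_le_const (μ := κ) (f := fun x => f x - f 0) (C := 2 * π)
      (ae_of_all _ fun x => by simpa [Real.norm_eq_abs] using test_osc hper hlip x)
    simpa [Real.norm_eq_abs] using this
  have h1 := abs_le.1 (key μ hintμ)
  have h2 := abs_le.1 (key ν hintν)
  have : (∫ x, f x ∂μ) - ∫ x, f x ∂ν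
      = ((∫ x, f x ∂μ) - f 0) - ((∫ x, f x ∂ν) - f 0) := by ring
  rw [this]
  linarith [h1.2, h2.1]

theorem W1_bddAbove {μ ν : Measure ℝ} [IsProbabilityMeasure μ] [IsProbabilityMeasure ν] :
    BddAbove (Set.range fun f : {f : ℝ → ℝ // Function.Periodic f (2 * π) ∧ LipschitzWith 1 f} =>
      (∫ x, f.1 x ∂μ) - ∫ x, f.1 x ∂ν) := by
  refine ⟨4 * π, ?_⟩
  rintro y ⟨f, rfl⟩
  exact W1_diff_le f

theorem le_W1 {μ ν : Measure ℝ} [IsProbabilityMeasure μ] [IsProbabilityMeasure ν]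
    (f : {f : ℝ → ℝ // Function.Periodic f (2 * π) ∧ LipschitzWith 1 f}) :
    (∫ x, f.1 x ∂μ) - ∫ x, f.1 x ∂ν ≤ W1 μ ν :=
  le_ciSup W1_bddAbove f

theorem W1_nonneg {μ ν : Measure ℝ} [IsProbabilityMeasure μ] [IsProbabilityMeasure ν] :
    0 ≤ W1 μ ν := by
  have := le_W1 (μ := μ) (ν := ν) ⟨fun _ => 0, fun _ => rfl, (LipschitzWith.const 0).weaken zero_le_one⟩
  simpa using this

theorem W1_le {μ ν : Measure ℝ} {a : ℝ}
    (h : ∀ f : {f : ℝ → ℝ // Function.Periodic f (2 * π) ∧ LipschitzWith 1 f},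
      (∫ x, f.1 x ∂μ) - ∫ x, f.1 x ∂ν ≤ a) (ha : 0 ≤ a) : W1 μ ν ≤ a :=
  Real.iSup_le h ha

theorem abs_diff_le_W1 {μ ν : Measure ℝ} [IsProbabilityMeasure μ] [IsProbabilityMeasure ν]
    {f : ℝ → ℝ} (hper : Function.Periodic f (2 * π)) (hlip : LipschitzWith 1 f) :
    |(∫ x, f x ∂μ) - ∫ x, f x ∂ν| ≤ W1 μ ν := by
  rcases abs_cases ((∫ x, f x ∂μ) - ∫ x, f x ∂ν) with ⟨he, _⟩ | ⟨he, _⟩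
  · rw [he]; exact le_W1 ⟨f, hper, hlip⟩
  · rw [he]
    have : -((∫ x, f x ∂μ) - ∫ x, f x ∂ν) = (∫ x, (-f) x ∂μ) - ∫ x, (-f) x ∂ν := by
      simp [integral_neg]
      ring
    rw [this]
    exact le_W1 ⟨-f, fun x => by simp [hper x], hlip.neg⟩

end W1aux

section kernel

open MeasureTheory Real Filter

variable {β : ℝ}

theorem kernel_integrable (hβ : 0 < β) (κ : Measure ℝ) [IsFiniteMeasure κ] {F : ℝ → ℝ}
    (hF : Measurable F) (c : ℝ) : Integrable (fun y => hBeta' β (c - F y)) κ :=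
  integrable_of_bound (((hBeta'_continuous hβ).measurable.comp
    (measurable_const.sub hF)).aestronglyMeasurable) (Real.exp β)
    (fun y => hBeta'_bound hβ _)

theorem kernel_norm (hβ : 0 < β) (κ : Measure ℝ) [IsProbabilityMeasure κ] (F : ℝ → ℝ) (c : ℝ) :
    |∫ y, hBeta' β (c - F y) ∂κ| ≤ Real.exp β := by
  have := norm_integral_le_of_norm_le_const (μ := κ) (f := fun y => hBeta' β (c - F y))
    (C := Real.exp β) (ae_of_all _ fun y => by
      simpa [Real.norm_eq_abs] using hBeta'_bound hβ (c - F y))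
  simpa [Real.norm_eq_abs, measure_univ] using this

theorem kernel_diff_norm2 (hβ : 0 < β) (κ : Measure ℝ) [IsProbabilityMeasure κ] {F G : ℝ → ℝ}
    (hF : Measurable F) (hG : Measurable G) (c c' : ℝ) {B : ℝ}
    (hFG : ∀ z, |(c - F z) - (c' - G z)| ≤ B) :
    |(∫ y, hBeta' β (c - F y) ∂κ) - ∫ y, hBeta' β (c' - G y) ∂κ| ≤ ((1 + β) * Real.exp β) * B := by
  rw [← integral_sub (kernel_integrable hβ κ hF c) (kernel_integrable hβ κ hG c')]
  have hB0 : 0 ≤ B := (abs_nonneg _).trans (hFG 0)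
  have := norm_integral_le_of_norm_le_const (μ := κ)
    (f := fun y => hBeta' β (c - F y) - hBeta' β (c' - G y))
    (C := ((1 + β) * Real.exp β) * B) (ae_of_all _ fun y => by
      rw [Real.norm_eq_abs]
      calc |hBeta' β (c - F y) - hBeta' β (c' - G y)|
          ≤ ((1 + β) * Real.exp β) * |(c - F y) - (c' - G y)| := hBeta'_lip hβ _ _
        _ ≤ ((1 + β) * Real.exp β) * B := by
            apply mul_le_mul_of_nonneg_left (hFG y) (by positivity))
  simpa [Real.norm_eq_abs, measure_univ] using this

end kernel

section stability

open MeasureTheory Real Filter Set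

theorem stability (β : ℝ) (hβ : 0 < β) (t : ℝ) (ht : 0 ≤ t) :
    ∃ K : ℝ, 0 ≤ K ∧ ∀ (μ ν : Measure ℝ), IsProbabilityMeasure μ → IsProbabilityMeasure ν →
    ∀ (T S : ℝ → ℝ → ℝ),
    (∀ x, T 0 x = x) → (∀ x, S 0 x = x) →
    (∀ s, 0 ≤ s → Measurable (T s)) → (∀ s, 0 ≤ s → Measurable (S s)) →
    (∀ s, 0 ≤ s → ∀ x, T s (x + 2 * π) = T s x + 2 * π) →
    (∀ x s, 0 ≤ s →
      HasDerivWithinAt (fun r => T r x) (∫ y, hBeta' β (T s x - T s y) ∂μ) (Set.Ici 0) s) →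
    (∀ x s, 0 ≤ s →
      HasDerivWithinAt (fun r => S r x) (∫ y, hBeta' β (S s x - S s y) ∂ν) (Set.Ici 0) s) →
    W1 (ν.map (S t)) (μ.map (T t)) ≤ K * W1 ν μ := by
  set C : ℝ := (1 + β) * Real.exp β with hCdef
  have hC : 0 < C := by positivity
  set M : ℝ := Real.exp β with hMdef
  have hM : 0 < M := Real.exp_pos β
  set E : ℝ := Real.exp (C * t) with hEdef
  have hE1 : 1 ≤ E := by
    rw [hEdef, ← Real.exp_zero]
    exact Real.exp_le_exp.2 (by positivity)
  have hE0 : 0 < E := lt_of_lt_of_le one_pos hE1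
  set τ : ℝ := Real.log (3 / 2) / C with hτdef
  have hτ : 0 < τ := div_pos (Real.log_pos (by norm_num)) hC
  have hexpτ : Real.exp (C * τ) = 3 / 2 := by
    rw [hτdef, mul_div_cancel₀ _ hC.ne', Real.exp_log (by norm_num)]
  set A : ℕ → ℝ := fun n => E * ((3:ℝ) ^ n - 1) / 2 with hAdef
  have hA0 : ∀ n, 0 ≤ A n := by
    intro n
    have : (1:ℝ) ≤ 3 ^ n := one_le_pow₀ (by norm_num)
    rw [hAdef]
    dsimp only
    nlinarith
  have hAmono : ∀ n, A n ≤ A (n + 1) := by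
    intro n
    rw [hAdef]
    dsimp only
    have : (3:ℝ) ^ n ≤ 3 ^ (n + 1) := by
      apply pow_le_pow_right₀ (by norm_num) (by omega)
    nlinarith
  have hArec : ∀ n, A (n + 1) = 3 * A n + E := by
    intro n
    rw [hAdef]
    dsimp only
    rw [pow_succ]
    ring
  set n' : ℕ := ⌈t / τ⌉₊ with hn'def
  refine ⟨A n' + E, by linarith [hA0 n', hE0], ?_⟩
  intro μ ν hμP hνP T S hT0 hS0 hTmeas hSmeas hTper hTode hSode
  set W : ℝ := W1 ν μ with hWdef
  have hW0 : 0 ≤ W := W1_nonneg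
  -- derivative of the difference
  have hwderiv : ∀ x s, 0 ≤ s → HasDerivWithinAt (fun r => S r x - T r x)
      ((∫ y, hBeta' β (S s x - S s y) ∂ν) - ∫ y, hBeta' β (T s x - T s y) ∂μ) (Set.Ici s) s := by
    intro x s hs
    exact ((hSode x s hs).sub (hTode x s hs)).mono (Set.Ici_subset_Ici.2 hs)
  have hwcont : ∀ x a b, 0 ≤ a → ContinuousOn (fun r => S r x - T r x) (Set.Icc a b) := by
    intro x a b ha
    intro s hs
    have hs0 : 0 ≤ s := ha.trans hs.1
    exact (((hSode x s hs0).sub (hTode x s hs0)).continuousWithinAt).mono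
      (fun z hz => ha.trans hz.1)
  -- Step 1 : crude bound |S s x - T s x| ≤ 2 M s
  have step1 : ∀ x s, 0 ≤ s → s ≤ t → |S s x - T s x| ≤ 2 * M * s := by
    intro x s hs0 hst
    have := norm_le_gronwallBound_of_norm_deriv_right_le (a := 0) (b := t)
      (f := fun r => S r x - T r x)
      (f' := fun r => (∫ y, hBeta' β (S r x - S r y) ∂ν) - ∫ y, hBeta' β (T r x - T r y) ∂μ)
      (δ := 0) (K := 0) (ε := 2 * M)
      (hwcont x 0 t le_rfl)
      (fun r hr => hwderiv x r hr.1)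
      (by simp [hS0, hT0])
      (fun r hr => by
        rw [Real.norm_eq_abs, zero_mul, zero_add]
        calc |(∫ y, hBeta' β (S r x - S r y) ∂ν) - ∫ y, hBeta' β (T r x - T r y) ∂μ|
            ≤ |∫ y, hBeta' β (S r x - S r y) ∂ν| + |∫ y, hBeta' β (T r x - T r y) ∂μ| :=
              abs_sub _ _
          _ ≤ M + M := by
              have h1 := kernel_norm hβ ν (S r) (S r x)
              have h2 := kernel_norm hβ μ (T r) (T r x)
              exact add_le_add h1 h2
          _ = 2 * M := by ring)
      s ⟨hs0, hst⟩
    rw [Real.norm_eq_abs] at this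
    calc |S s x - T s x| ≤ gronwallBound 0 0 (2 * M) (s - 0) := this
      _ = 2 * M * s := by rw [gronwallBound_K0]; ring
  -- Step 2 : spatial Lipschitz bound for T
  have step2 : ∀ x x' s, 0 ≤ s → s ≤ t → |T s x - T s x'| ≤ Real.exp (C * s) * |x - x'| := by
    intro x x' s hs0 hst
    have hcont : ContinuousOn (fun r => T r x - T r x') (Set.Icc 0 t) := by
      intro s hs
      exact (((hTode x s hs.1).sub (hTode x' s hs.1)).continuousWithinAt).mono
        (fun z hz => hz.1)
    have := norm_le_gronwallBound_of_norm_deriv_right_le (a := 0) (b := t)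
      (f := fun r => T r x - T r x')
      (f' := fun r => (∫ y, hBeta' β (T r x - T r y) ∂μ) - ∫ y, hBeta' β (T r x' - T r y) ∂μ)
      (δ := |x - x'|) (K := C) (ε := 0)
      hcont
      (fun r hr => ((hTode x r hr.1).sub (hTode x' r hr.1)).mono (Set.Ici_subset_Ici.2 hr.1))
      (by show ‖T 0 x - T 0 x'‖ ≤ _; rw [hT0, hT0, Real.norm_eq_abs])
      (fun r hr => by
        rw [Real.norm_eq_abs, Real.norm_eq_abs, add_zero]
        exact kernel_diff_norm2 hβ μ (hTmeas r hr.1) (hTmeas r hr.1) (T r x) (T r x')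
          (fun z => by rw [show (T r x - T r z) - (T r x' - T r z) = T r x - T r x' by ring]))
      s ⟨hs0, hst⟩
    rw [Real.norm_eq_abs] at this
    calc |T s x - T s x'| ≤ gronwallBound |x - x'| C 0 (s - 0) := this
      _ = Real.exp (C * s) * |x - x'| := by rw [sub_zero, gronwallBound_ε0]; ring
  -- I₃ estimate
  have hI3 : ∀ s, 0 ≤ s → s ≤ t → ∀ c,
      |(∫ y, hBeta' β (c - T s y) ∂ν) - ∫ y, hBeta' β (c - T s y) ∂μ| ≤ C * E * W := by
    intro s hs0 hst c
    set L : ℝ := C * Real.exp (C * s) with hLdef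
    have hL : 0 < L := by positivity
    set φ : ℝ → ℝ := fun y => hBeta' β (c - T s y) with hφdef
    set ψ : ℝ → ℝ := fun y => L⁻¹ * φ y with hψdef
    have hψper : Function.Periodic ψ (2 * π) := by
      intro y
      simp only [hψdef, hφdef]
      rw [hTper s hs0 y]
      rw [show c - (T s y + 2 * π) = c - T s y - 2 * π by ring,
        (hBeta'_periodic hβ).sub_eq]
    have hψlip : LipschitzWith 1 ψ := by
      apply LipschitzWith.of_dist_le_mul
      intro y y'
      rw [Real.dist_eq, Real.dist_eq, NNReal.coe_one, one_mul]
      simp only [hψdef]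
      rw [← mul_sub, abs_mul, abs_of_pos (inv_pos.2 hL)]
      have h1 : |φ y - φ y'| ≤ C * |T s y - T s y'| := by
        have := hBeta'_lip hβ (c - T s y) (c - T s y')
        calc |φ y - φ y'| ≤ C * |(c - T s y) - (c - T s y')| := this
          _ = C * |T s y' - T s y| := by rw [show (c - T s y) - (c - T s y') = T s y' - T s y by ring]
          _ = C * |T s y - T s y'| := by rw [abs_sub_comm]
      have h2 : |T s y - T s y'| ≤ Real.exp (C * s) * |y - y'| := step2 y y' s hs0 hst
      calc L⁻¹ * |φ y - φ y'| ≤ L⁻¹ * (C * (Real.exp (C * s) * |y - y'|)) := by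
            apply mul_le_mul_of_nonneg_left _ (inv_pos.2 hL).le
            calc |φ y - φ y'| ≤ C * |T s y - T s y'| := h1
              _ ≤ C * (Real.exp (C * s) * |y - y'|) :=
                mul_le_mul_of_nonneg_left h2 hC.le
        _ = |y - y'| := by
            have he : C * (Real.exp (C * s) * |y - y'|) = L * |y - y'| := by
              rw [hLdef]; ring
            rw [he, inv_mul_cancel_left₀ hL.ne']
    have hW := abs_diff_le_W1 (μ := ν) (ν := μ) hψper hψlip
    have hint : ∀ (κ : Measure ℝ), (∫ y, ψ y ∂κ) = L⁻¹ * ∫ y, φ y ∂κ := by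
      intro κ
      simp only [hψdef]
      exact integral_const_mul _ _
    rw [hint ν, hint μ, ← mul_sub, abs_mul, abs_of_pos (inv_pos.2 hL)] at hW
    have : |(∫ y, φ y ∂ν) - ∫ y, φ y ∂μ| ≤ L * W := by
      rw [← hWdef] at hW
      calc |(∫ y, φ y ∂ν) - ∫ y, φ y ∂μ|
          = L * (L⁻¹ * |(∫ y, φ y ∂ν) - ∫ y, φ y ∂μ|) := by field_simp
        _ ≤ L * W := mul_le_mul_of_nonneg_left hW hL.le
    calc |(∫ y, φ y ∂ν) - ∫ y, φ y ∂μ| ≤ L * W := this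
      _ ≤ C * E * W := by
          apply mul_le_mul_of_nonneg_right _ hW0
          rw [hLdef, hEdef]
          exact mul_le_mul_of_nonneg_left
            (Real.exp_le_exp.2 (mul_le_mul_of_nonneg_left hst hC.le)) hC.le
  -- main induction
  have main : ∀ n : ℕ, ∀ x r, 0 ≤ r → r ≤ t → r ≤ n * τ → |S r x - T r x| ≤ A n * W := by
    intro n
    induction n with
    | zero =>
      intro x r hr0 _ hrn
      have : r = 0 := le_antisymm (by simpa using hrn) hr0
      subst this
      simp [hS0, hT0, hAdef]
    | succ n IH =>
      intro x r hr0 hrt hrn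
      by_cases hcase : r ≤ n * τ
      · exact (IH x r hr0 hrt hcase).trans
          (mul_le_mul_of_nonneg_right (hAmono n) hW0)
      push_neg at hcase
      set t₀ : ℝ := n * τ with ht₀def
      have ht₀0 : 0 ≤ t₀ := by positivity
      have ht₀r : t₀ ≤ r := hcase.le
      have hrτ : r - t₀ ≤ τ := by
        have : r ≤ (n + 1) * τ := by exact_mod_cast hrn
        rw [ht₀def]; nlinarith
      have ht₀t : t₀ ≤ t := ht₀r.trans hrt
      haveI : Nonempty (Set.Icc t₀ r) := ⟨⟨t₀, le_rfl, ht₀r⟩⟩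
      set Θ : ℝ := ⨆ p : (Set.Icc t₀ r) × ℝ, |S p.1.1 p.2 - T p.1.1 p.2| with hΘdef
      have hΘbdd : BddAbove (Set.range fun p : (Set.Icc t₀ r) × ℝ =>
          |S p.1.1 p.2 - T p.1.1 p.2|) := by
        refine ⟨2 * M * t, ?_⟩
        rintro z ⟨⟨⟨s, hs⟩, y⟩, rfl⟩
        have hs0 : 0 ≤ s := ht₀0.trans hs.1
        have hst : s ≤ t := hs.2.trans hrt
        calc |S s y - T s y| ≤ 2 * M * s := step1 y s hs0 hst
          _ ≤ 2 * M * t := by nlinarith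
      have hΘle : ∀ s, t₀ ≤ s → s ≤ r → ∀ y, |S s y - T s y| ≤ Θ := by
        intro s hs1 hs2 y
        exact le_ciSup hΘbdd (⟨⟨s, hs1, hs2⟩, y⟩ : (Set.Icc t₀ r) × ℝ)
      have hΘ0 : 0 ≤ Θ := (abs_nonneg _).trans (hΘle t₀ le_rfl ht₀r 0)
      -- Grönwall on [t₀, s'] for every point
      have key : ∀ y s', t₀ ≤ s' → s' ≤ r →
          |S s' y - T s' y| ≤ 3 / 2 * (A n * W) + (Θ + E * W) / 2 := by
        intro y s' hs'1 hs'2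
        have hs'0 : 0 ≤ s' := ht₀0.trans hs'1
        have := norm_le_gronwallBound_of_norm_deriv_right_le (a := t₀) (b := s')
          (f := fun r => S r y - T r y)
          (f' := fun r => (∫ z, hBeta' β (S r y - S r z) ∂ν) - ∫ z, hBeta' β (T r y - T r z) ∂μ)
          (δ := A n * W) (K := C) (ε := C * Θ + C * (E * W))
          (hwcont y t₀ s' ht₀0)
          (fun r hr => hwderiv y r (ht₀0.trans hr.1))
          (by
            rw [Real.norm_eq_abs]
            exact IH y t₀ ht₀0 ht₀t le_rfl)
          (fun s hs => by
            have hs0 : 0 ≤ s := ht₀0.trans hs.1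
            have hst : s ≤ t := (hs.2.le.trans hs'2).trans hrt
            have hsr : s ≤ r := hs.2.le.trans hs'2
            rw [Real.norm_eq_abs, Real.norm_eq_abs]
            have hsplit : (∫ z, hBeta' β (S s y - S s z) ∂ν) - ∫ z, hBeta' β (T s y - T s z) ∂μ
                = ((∫ z, hBeta' β (S s y - S s z) ∂ν) - ∫ z, hBeta' β (S s y - T s z) ∂ν)
                + ((∫ z, hBeta' β (S s y - T s z) ∂ν) - ∫ z, hBeta' β (T s y - T s z) ∂ν)
                + ((∫ z, hBeta' β (T s y - T s z) ∂ν) - ∫ z, hBeta' β (T s y - T s z) ∂μ) := by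
              ring
            have hI1 : |(∫ z, hBeta' β (S s y - S s z) ∂ν) - ∫ z, hBeta' β (S s y - T s z) ∂ν|
                ≤ C * Θ := by
              apply kernel_diff_norm2 hβ ν (hSmeas s hs0) (hTmeas s hs0)
              intro z
              rw [show (S s y - S s z) - (S s y - T s z) = -(S s z - T s z) by ring, abs_neg]
              exact hΘle s hs.1 hsr z
            have hI2 : |(∫ z, hBeta' β (S s y - T s z) ∂ν) - ∫ z, hBeta' β (T s y - T s z) ∂ν|
                ≤ C * |S s y - T s y| := by
              apply kernel_diff_norm2 hβ ν (hTmeas s hs0) (hTmeas s hs0)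
              intro z
              rw [show (S s y - T s z) - (T s y - T s z) = S s y - T s y by ring]
            have hI3' := hI3 s hs0 hst (T s y)
            calc |(∫ z, hBeta' β (S s y - S s z) ∂ν) - ∫ z, hBeta' β (T s y - T s z) ∂μ|
                ≤ C * Θ + C * |S s y - T s y| + C * E * W := by
                  rw [hsplit]
                  have := abs_add_le
                    (((∫ z, hBeta' β (S s y - S s z) ∂ν) - ∫ z, hBeta' β (S s y - T s z) ∂ν)
                    + ((∫ z, hBeta' β (S s y - T s z) ∂ν) - ∫ z, hBeta' β (T s y - T s z) ∂ν))
                    ((∫ z, hBeta' β (T s y - T s z) ∂ν) - ∫ z, hBeta' β (T s y - T s z) ∂μ)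
                  have := abs_add_le
                    ((∫ z, hBeta' β (S s y - S s z) ∂ν) - ∫ z, hBeta' β (S s y - T s z) ∂ν)
                    ((∫ z, hBeta' β (S s y - T s z) ∂ν) - ∫ z, hBeta' β (T s y - T s z) ∂ν)
                  linarith
              _ = C * |S s y - T s y| + (C * Θ + C * (E * W)) := by ring)
          s' ⟨hs'1, le_rfl⟩
        rw [Real.norm_eq_abs] at this
        have hσ0 : 0 ≤ s' - t₀ := by linarith
        have hστ : s' - t₀ ≤ τ := by linarith
        have hexp : Real.exp (C * (s' - t₀)) ≤ 3 / 2 := by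
          rw [← hexpτ]
          exact Real.exp_le_exp.2 (mul_le_mul_of_nonneg_left hστ hC.le)
        have hexp0 : 1 ≤ Real.exp (C * (s' - t₀)) := by
          rw [← Real.exp_zero]
          exact Real.exp_le_exp.2 (by positivity)
        calc |S s' y - T s' y| ≤ gronwallBound (A n * W) C (C * Θ + C * (E * W)) (s' - t₀) :=
            this
          _ = (A n * W) * Real.exp (C * (s' - t₀))
              + (Θ + E * W) * (Real.exp (C * (s' - t₀)) - 1) := by
              rw [gronwallBound_of_K_ne_0 hC.ne']
              have : (C * Θ + C * (E * W)) / C = Θ + E * W := by field_simp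
              rw [this]
          _ ≤ 3 / 2 * (A n * W) + (Θ + E * W) / 2 := by
              have h1 : 0 ≤ A n * W := mul_nonneg (hA0 n) hW0
              have h2 : 0 ≤ Θ + E * W := by positivity
              nlinarith
      have hΘsup : Θ ≤ 3 / 2 * (A n * W) + (Θ + E * W) / 2 := by
        apply Real.iSup_le _ (by
          have := mul_nonneg (hA0 n) hW0
          have := mul_nonneg hE0.le hW0
          linarith)
        rintro ⟨⟨s, hs⟩, y⟩
        exact key y s hs.1 hs.2
      have hΘfin : Θ ≤ 3 * (A n * W) + E * W := by linarith
      calc |S r x - T r x| ≤ Θ := hΘle r ht₀r le_rfl x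
        _ ≤ 3 * (A n * W) + E * W := hΘfin
        _ = A (n + 1) * W := by rw [hArec]; ring
  -- conclusion at time t
  have hfinal : ∀ x, |S t x - T t x| ≤ A n' * W := by
    intro x
    apply main n' x t ht le_rfl
    have := Nat.le_ceil (t / τ)
    rw [hn'def]
    calc t = t / τ * τ := by field_simp
      _ ≤ n' * τ := mul_le_mul_of_nonneg_right (by exact_mod_cast this) hτ.le
  -- final W1 estimate
  apply W1_le _ (by
    have := mul_nonneg (hA0 n') hW0
    have := mul_nonneg hE0.le hW0
    nlinarith)
  rintro ⟨f, hper, hlip⟩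
  have hfc : Continuous f := hlip.continuous
  have hmapν : ∫ x, f x ∂(ν.map (S t)) = ∫ x, f (S t x) ∂ν :=
    integral_map (hSmeas t ht).aemeasurable hfc.aestronglyMeasurable
  have hmapμ : ∫ x, f x ∂(μ.map (T t)) = ∫ x, f (T t x) ∂μ :=
    integral_map (hTmeas t ht).aemeasurable hfc.aestronglyMeasurable
  simp only
  rw [hmapν, hmapμ]
  have hintS : Integrable (fun x => f (S t x)) ν :=
    integrable_of_bound (hfc.measurable.comp (hSmeas t ht)).aestronglyMeasurable _
      (fun x => test_bound hper hlip (S t x))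
  have hintTν : Integrable (fun x => f (T t x)) ν :=
    integrable_of_bound (hfc.measurable.comp (hTmeas t ht)).aestronglyMeasurable _
      (fun x => test_bound hper hlip (T t x))
  have h1 : (∫ x, f (S t x) ∂ν) - ∫ x, f (T t x) ∂ν ≤ A n' * W := by
    rw [← integral_sub hintS hintTν]
    have := norm_integral_le_of_norm_le_const (μ := ν)
      (f := fun x => f (S t x) - f (T t x)) (C := A n' * W)
      (ae_of_all _ fun x => by
        rw [Real.norm_eq_abs]
        have hl := hlip.dist_le_mul (S t x) (T t x)
        rw [Real.dist_eq, Real.dist_eq, NNReal.coe_one, one_mul] at hl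
        exact hl.trans (hfinal x))
    rw [Real.norm_eq_abs] at this
    simp only [measure_univ, probReal_univ, ENNReal.toReal_one, mul_one] at this
    exact (le_abs_self _).trans this
  have h2 : (∫ x, f (T t x) ∂ν) - ∫ x, f (T t x) ∂μ ≤ E * W := by
    set ψ : ℝ → ℝ := fun x => E⁻¹ * f (T t x) with hψdef
    have hψper : Function.Periodic ψ (2 * π) := by
      intro x
      simp only [hψdef]
      rw [hTper t ht x, hper (T t x)]
    have hψlip : LipschitzWith 1 ψ := by
      apply LipschitzWith.of_dist_le_mul
      intro x x'
      rw [Real.dist_eq, Real.dist_eq, NNReal.coe_one, one_mul]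
      simp only [hψdef]
      rw [← mul_sub, abs_mul, abs_of_pos (inv_pos.2 hE0)]
      have hl := hlip.dist_le_mul (T t x) (T t x')
      rw [Real.dist_eq, Real.dist_eq, NNReal.coe_one, one_mul] at hl
      have h2' := step2 x x' t ht le_rfl
      rw [← hEdef] at h2'
      calc E⁻¹ * |f (T t x) - f (T t x')| ≤ E⁻¹ * (E * |x - x'|) := by
            apply mul_le_mul_of_nonneg_left _ (inv_pos.2 hE0).le
            exact hl.trans h2'
        _ = |x - x'| := inv_mul_cancel_left₀ hE0.ne' _
    have hW := le_W1 (μ := ν) (ν := μ) ⟨ψ, hψper, hψlip⟩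
    simp only [hψdef] at hW
    rw [integral_const_mul, integral_const_mul, ← mul_sub] at hW
    rw [← hWdef] at hW
    calc (∫ x, f (T t x) ∂ν) - ∫ x, f (T t x) ∂μ
        = E * (E⁻¹ * ((∫ x, f (T t x) ∂ν) - ∫ x, f (T t x) ∂μ)) :=
          (mul_inv_cancel_left₀ hE0.ne' _).symm
      _ ≤ E * W := mul_le_mul_of_nonneg_left hW hE0.le
  calc (∫ x, f (S t x) ∂ν) - ∫ x, f (T t x) ∂μ
      = ((∫ x, f (S t x) ∂ν) - ∫ x, f (T t x) ∂ν)
        + ((∫ x, f (T t x) ∂ν) - ∫ x, f (T t x) ∂μ) := by ring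
    _ ≤ A n' * W + E * W := add_le_add h1 h2
    _ = (A n' + E) * W := by ring

end stability


/-- Mean-field limit: convergence of the empirical dynamics to the mean-field dynamics
at every fixed time. -/
theorem mean_field_limit (β : ℝ) (hβpos : 0 < β)
    (μ₀ : Measure ℝ) [IsProbabilityMeasure μ₀]
    (μ₀seq : ℕ → Measure ℝ) (hprob : ∀ N, IsProbabilityMeasure (μ₀seq N))
    (hconv : Tendsto (fun N => W1 (μ₀seq N) μ₀) atTop (nhds 0))
    (T : ℝ → ℝ → ℝ) (TN : ℕ → ℝ → ℝ → ℝ)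
    (hT0 : ∀ x, T 0 x = x) (hTN0 : ∀ N x, TN N 0 x = x)
    (hTmeas : ∀ t, 0 ≤ t → Measurable (T t))
    (hTNmeas : ∀ N t, 0 ≤ t → Measurable (TN N t))
    (hTper : ∀ t, 0 ≤ t → ∀ x, T t (x + 2 * π) = T t x + 2 * π)
    (hTNper : ∀ N t, 0 ≤ t → ∀ x, TN N t (x + 2 * π) = TN N t x + 2 * π)
    (hTode : ∀ x : ℝ, ∀ t, 0 ≤ t →
      HasDerivWithinAt (fun s => T s x)
        (∫ y, hBeta' β (T t x - T t y) ∂μ₀) (Set.Ici 0) t)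
    (hTNode : ∀ N, ∀ x : ℝ, ∀ t, 0 ≤ t →
      HasDerivWithinAt (fun s => TN N s x)
        (∫ y, hBeta' β (TN N t x - TN N t y) ∂(μ₀seq N)) (Set.Ici 0) t)
    (t : ℝ) (ht : 0 ≤ t) :
    Tendsto (fun N => W1 ((μ₀seq N).map (TN N t)) (μ₀.map (T t))) atTop (nhds 0) := by
  obtain ⟨K, hK0, hK⟩ := stability β hβpos t ht
  have hbound : ∀ N, W1 ((μ₀seq N).map (TN N t)) (μ₀.map (T t)) ≤ K * W1 (μ₀seq N) μ₀ := by
    intro N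
    exact hK μ₀ (μ₀seq N) inferInstance (hprob N) T (TN N) hT0 (hTN0 N)
      hTmeas (hTNmeas N) hTper (fun x s hs => hTode x s hs) (fun x s hs => hTNode N x s hs)
  have hnonneg : ∀ N, 0 ≤ W1 ((μ₀seq N).map (TN N t)) (μ₀.map (T t)) := by
    intro N
    haveI := hprob N
    haveI : IsProbabilityMeasure ((μ₀seq N).map (TN N t)) :=
      Measure.isProbabilityMeasure_map (hTNmeas N t ht).aemeasurable
    haveI : IsProbabilityMeasure (μ₀.map (T t)) :=
      Measure.isProbabilityMeasure_map (hTmeas t ht).aemeasurable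
    exact W1_nonneg
  have hlim : Tendsto (fun N => K * W1 (μ₀seq N) μ₀) atTop (nhds 0) := by
    have := hconv.const_mul K
    simpa using this
  exact squeeze_zero hnonneg hbound hlim
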